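/- Every multiplicatively closed ordinal is closed under Hessenberg natural multiplication: if α is an ordinal such that β * γ < α for all β < α and γ < α, then for all β < α and γ < α the natural product satisfies β ⨳ γ < α. -/

import Mathlib

universe u

namespace Ordinal

/-- Natural (Hessenberg) addition, as in Mathlib of December 2024. -/
noncomputable def nadd (a b : Ordinal.{u}) : Ordinal.{u} :=
  max (⨆ x : Set.Iio a, Order.succ (nadd x.1 b)) (⨆ x : Set.Iio b, Order.succ (nadd a x.1))
termination_by (a, b)
decreasing_by all_goals cases x; decreasing_tactic

infixl:65 " ♯ " => Ordinal.nadd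

/-- Natural (Hessenberg) multiplication, as in Mathlib of December 2024. -/
noncomputable def nmul (a b : Ordinal.{u}) : Ordinal.{u} :=
  sInf {c | ∀ a' < a, ∀ b' < b, nmul a' b ♯ nmul a b' < c ♯ nmul a' b'}
termination_by (a, b)

end Ordinal

infixl:70 " ⨳ " => Ordinal.nmul

namespace Ordinal

theorem nadd_def (a b : Ordinal.{u}) : a ♯ b =
    max (⨆ x : Set.Iio a, Order.succ (x.1 ♯ b)) (⨆ x : Set.Iio b, Order.succ (a ♯ x.1)) := by
  rw [nadd]

theorem nadd_le_iff {a b c : Ordinal.{u}} :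
    b ♯ c ≤ a ↔ (∀ b' < b, b' ♯ c < a) ∧ ∀ c' < c, b ♯ c' < a := by
  rw [nadd_def, max_le_iff, Ordinal.iSup_le_iff, Ordinal.iSup_le_iff]
  simp only [Order.succ_le_iff, Subtype.forall, Set.mem_Iio]

theorem lt_nadd_iff {a b c : Ordinal.{u}} :
    a < b ♯ c ↔ (∃ b' < b, a ≤ b' ♯ c) ∨ ∃ c' < c, a ≤ b ♯ c' := by
  rw [← not_le, nadd_le_iff]
  simp only [not_and_or, not_forall, not_lt, exists_prop]

theorem nadd_lt_nadd_left {b c : Ordinal.{u}} (h : b < c) (a : Ordinal.{u}) : a ♯ b < a ♯ c :=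
  (nadd_le_iff.1 (le_refl (a ♯ c))).2 b h

theorem nadd_lt_nadd_right {b c : Ordinal.{u}} (h : b < c) (a : Ordinal.{u}) : b ♯ a < c ♯ a :=
  (nadd_le_iff.1 (le_refl (c ♯ a))).1 b h

theorem nadd_le_nadd_left {b c : Ordinal.{u}} (h : b ≤ c) (a : Ordinal.{u}) : a ♯ b ≤ a ♯ c := by
  rcases h.lt_or_eq with h | rfl
  · exact (nadd_lt_nadd_left h a).le
  · exact le_rfl

theorem nadd_le_nadd_right {b c : Ordinal.{u}} (h : b ≤ c) (a : Ordinal.{u}) : b ♯ a ≤ c ♯ a := by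
  rcases h.lt_or_eq with h | rfl
  · exact (nadd_lt_nadd_right h a).le
  · exact le_rfl

theorem nadd_le_nadd {a b c d : Ordinal.{u}} (h₁ : a ≤ b) (h₂ : c ≤ d) : a ♯ c ≤ b ♯ d :=
  (nadd_le_nadd_left h₂ a).trans (nadd_le_nadd_right h₁ d)

theorem nadd_lt_nadd {a b c d : Ordinal.{u}} (h₁ : a < b) (h₂ : c < d) : a ♯ c < b ♯ d :=
  (nadd_lt_nadd_left h₂ a).trans (nadd_lt_nadd_right h₁ d)

theorem nadd_lt_nadd_of_lt_of_le {a b c d : Ordinal.{u}} (h₁ : a < b) (h₂ : c ≤ d) :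
    a ♯ c < b ♯ d :=
  (nadd_le_nadd_left h₂ a).trans_lt (nadd_lt_nadd_right h₁ d)

theorem le_self_nadd {a b : Ordinal.{u}} : a ≤ a ♯ b := by
  induction a using WellFoundedLT.induction with
  | _ a IH =>
  by_contra h
  push_neg at h
  exact (IH _ h).not_gt (nadd_lt_nadd_right h b)

private theorem nadd_comm_le (a b : Ordinal.{u}) : a ♯ b ≤ b ♯ a := by
  rw [nadd_le_iff]
  refine ⟨fun a' ha => ?_, fun b' hb => ?_⟩
  · exact (nadd_comm_le a' b).trans_lt (nadd_lt_nadd_left ha b)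
  · exact (nadd_comm_le a b').trans_lt (nadd_lt_nadd_right hb a)
termination_by (a, b)

theorem nadd_comm (a b : Ordinal.{u}) : a ♯ b = b ♯ a :=
  le_antisymm (nadd_comm_le a b) (nadd_comm_le b a)

theorem le_nadd_self {a b : Ordinal.{u}} : a ≤ b ♯ a := by
  rw [nadd_comm]; exact le_self_nadd

@[simp] theorem nadd_zero (a : Ordinal.{u}) : a ♯ 0 = a := by
  apply le_antisymm _ le_self_nadd
  rw [nadd_le_iff]
  refine ⟨fun a' ha => ?_, fun c hc => by simp at hc⟩
  rw [nadd_zero a']; exact ha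
termination_by a

@[simp] theorem zero_nadd (a : Ordinal.{u}) : 0 ♯ a = a := by
  rw [nadd_comm, nadd_zero]

theorem nadd_assoc (a b c : Ordinal.{u}) : a ♯ b ♯ c = a ♯ (b ♯ c) := by
  apply le_antisymm
  · rw [nadd_le_iff]; constructor
    · intro x hx
      rcases lt_nadd_iff.1 hx with ⟨a', ha, h⟩ | ⟨b', hb, h⟩
      · calc x ♯ c ≤ a' ♯ b ♯ c := nadd_le_nadd_right h c
          _ = a' ♯ (b ♯ c) := nadd_assoc a' b c
          _ < a ♯ (b ♯ c) := nadd_lt_nadd_right ha _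
      · calc x ♯ c ≤ a ♯ b' ♯ c := nadd_le_nadd_right h c
          _ = a ♯ (b' ♯ c) := nadd_assoc a b' c
          _ < a ♯ (b ♯ c) := nadd_lt_nadd_left (nadd_lt_nadd_right hb c) a
    · intro c' hc
      calc a ♯ b ♯ c' = a ♯ (b ♯ c') := nadd_assoc a b c'
        _ < a ♯ (b ♯ c) := nadd_lt_nadd_left (nadd_lt_nadd_left hc b) a
  · rw [nadd_le_iff]; constructor
    · intro a' ha
      calc a' ♯ (b ♯ c) = a' ♯ b ♯ c := (nadd_assoc a' b c).symm
        _ < a ♯ b ♯ c := nadd_lt_nadd_right (nadd_lt_nadd_right ha b) c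
    · intro x hx
      rcases lt_nadd_iff.1 hx with ⟨b', hb, h⟩ | ⟨c', hc, h⟩
      · calc a ♯ x ≤ a ♯ (b' ♯ c) := nadd_le_nadd_left h a
          _ = a ♯ b' ♯ c := (nadd_assoc a b' c).symm
          _ < a ♯ b ♯ c := nadd_lt_nadd_right (nadd_lt_nadd_left hb a) c
      · calc a ♯ x ≤ a ♯ (b ♯ c') := nadd_le_nadd_left h a
          _ = a ♯ b ♯ c' := (nadd_assoc a b c').symm
          _ < a ♯ b ♯ c := nadd_lt_nadd_left hc _
termination_by (a, b, c)

instance : Std.Associative (α := Ordinal.{u}) Ordinal.nadd := ⟨nadd_assoc⟩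
instance : Std.Commutative (α := Ordinal.{u}) Ordinal.nadd := ⟨nadd_comm⟩

theorem nadd_le_nadd_iff_left (a : Ordinal.{u}) {b c : Ordinal.{u}} : a ♯ b ≤ a ♯ c ↔ b ≤ c :=
  ⟨fun h => le_of_not_gt fun h' => (nadd_lt_nadd_left h' a).not_ge h,
    fun h => nadd_le_nadd_left h a⟩

theorem nadd_lt_nadd_iff_left (a : Ordinal.{u}) {b c : Ordinal.{u}} : a ♯ b < a ♯ c ↔ b < c :=
  ⟨fun h => lt_of_not_ge fun h' => (nadd_le_nadd_left h' a).not_gt h,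
    fun h => nadd_lt_nadd_left h a⟩

theorem nadd_le_nadd_iff_right (a : Ordinal.{u}) {b c : Ordinal.{u}} : b ♯ a ≤ c ♯ a ↔ b ≤ c := by
  rw [nadd_comm b, nadd_comm c, nadd_le_nadd_iff_left]

theorem nadd_lt_nadd_iff_right (a : Ordinal.{u}) {b c : Ordinal.{u}} : b ♯ a < c ♯ a ↔ b < c := by
  rw [nadd_comm b, nadd_comm c, nadd_lt_nadd_iff_left]

theorem add_le_nadd (a b : Ordinal.{u}) : a + b ≤ a ♯ b := by
  induction b using WellFoundedLT.induction with
  | _ b IH =>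
  rcases eq_or_ne b 0 with rfl | hb
  · simp
  refine le_of_forall_lt fun x hx => ?_
  obtain ⟨d, hd, hx⟩ := (lt_add_iff hb).1 hx
  exact hx.trans_lt ((IH d hd).trans_lt (nadd_lt_nadd_left hd a))

theorem nadd_succ (a b : Ordinal.{u}) : a ♯ Order.succ b = Order.succ (a ♯ b) := by
  apply le_antisymm
  · rw [nadd_le_iff]; constructor
    · intro a' ha
      rw [nadd_succ a' b, Order.succ_lt_succ_iff]
      exact nadd_lt_nadd_right ha b
    · intro b' hb
      exact Order.lt_succ_iff.2 (nadd_le_nadd_left (Order.lt_succ_iff.1 hb) a)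
  · exact Order.succ_le_of_lt (nadd_lt_nadd_left (Order.lt_succ b) a)
termination_by a

theorem succ_nadd (a b : Ordinal.{u}) : Order.succ a ♯ b = Order.succ (a ♯ b) := by
  rw [nadd_comm, nadd_succ, nadd_comm]

theorem nadd_one (a : Ordinal.{u}) : a ♯ 1 = Order.succ a := by
  rw [← Ordinal.succ_zero, nadd_succ, nadd_zero]

theorem nadd_nat (a : Ordinal.{u}) (n : ℕ) : a ♯ (n : Ordinal) = a + n := by
  induction n with
  | zero => simp
  | succ n ih =>
    rw [Nat.cast_succ, Ordinal.add_one_eq_succ, nadd_succ, ih, Ordinal.add_succ]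

/-! ### natural multiplication -/

theorem nmul_def (a b : Ordinal.{u}) :
    a ⨳ b = sInf {c | ∀ a' < a, ∀ b' < b, a' ⨳ b ♯ a ⨳ b' < c ♯ a' ⨳ b'} := by
  rw [nmul]

theorem nmul_nonempty (a b : Ordinal.{u}) :
    {c : Ordinal.{u} | ∀ a' < a, ∀ b' < b, a' ⨳ b ♯ a ⨳ b' < c ♯ a' ⨳ b'}.Nonempty := by
  obtain ⟨c, hc⟩ : BddAbove (Set.range fun x : Set.Iio a × Set.Iio b => x.1.1 ⨳ b ♯ a ⨳ x.2.1) :=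
    Ordinal.bddAbove_of_small
  exact ⟨Order.succ c, fun a' ha b' hb =>
    (Order.lt_succ_iff.2 (hc ⟨(⟨a', ha⟩, ⟨b', hb⟩), rfl⟩)).trans_le le_self_nadd⟩

theorem nmul_nadd_lt {a' b' a b : Ordinal.{u}} (ha : a' < a) (hb : b' < b) :
    a' ⨳ b ♯ a ⨳ b' < a ⨳ b ♯ a' ⨳ b' := by
  have := csInf_mem (nmul_nonempty a b)
  rw [← nmul_def] at this
  exact this a' ha b' hb

theorem nmul_nadd_le {a' b' a b : Ordinal.{u}} (ha : a' ≤ a) (hb : b' ≤ b) :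
    a' ⨳ b ♯ a ⨳ b' ≤ a ⨳ b ♯ a' ⨳ b' := by
  rcases lt_or_eq_of_le ha with ha | rfl
  · rcases lt_or_eq_of_le hb with hb | rfl
    · exact (nmul_nadd_lt ha hb).le
    · rw [nadd_comm]
  · exact le_rfl

theorem nmul_le_iff {a b c : Ordinal.{u}} :
    a ⨳ b ≤ c ↔ ∀ a' < a, ∀ b' < b, a' ⨳ b ♯ a ⨳ b' < c ♯ a' ⨳ b' := by
  refine ⟨fun h a' ha b' hb => (nmul_nadd_lt ha hb).trans_le (nadd_le_nadd_right h _),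
    fun h => ?_⟩
  rw [nmul_def]
  exact csInf_le' h

theorem lt_nmul_iff {a b c : Ordinal.{u}} :
    c < a ⨳ b ↔ ∃ a' < a, ∃ b' < b, c ♯ a' ⨳ b' ≤ a' ⨳ b ♯ a ⨳ b' := by
  rw [← not_le, nmul_le_iff]
  simp only [not_forall, not_lt, exists_prop]

@[simp] theorem zero_nmul (a : Ordinal.{u}) : 0 ⨳ a = 0 := by
  rw [nmul_def]
  exact le_antisymm (csInf_le' fun a' ha => by simp at ha) (by simp)

@[simp] theorem nmul_zero (a : Ordinal.{u}) : a ⨳ 0 = 0 := by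
  rw [nmul_def]
  exact le_antisymm (csInf_le' fun a' _ b' hb => by simp at hb) (by simp)

theorem nmul_comm (a b : Ordinal.{u}) : a ⨳ b = b ⨳ a := by
  rw [nmul_def a b, nmul_def b a]
  congr 1
  ext x
  constructor <;> intro H c hc d hd
  · have := H d hd c hc
    rwa [nmul_comm d b, nmul_comm a c, nmul_comm d c, nadd_comm (b ⨳ d)] at this
  · have := H d hd c hc
    rwa [← nmul_comm a d, ← nmul_comm c b, ← nmul_comm c d, nadd_comm (a ⨳ d)] at this
termination_by (a, b)

theorem nmul_one (a : Ordinal.{u}) : a ⨳ 1 = a := by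
  apply le_antisymm
  · rw [nmul_le_iff]
    intro a' ha b' hb
    rw [Ordinal.lt_one_iff_zero] at hb
    subst hb
    rw [nmul_zero, nmul_zero, nadd_zero, nadd_zero, nmul_one a']
    exact ha
  · refine le_of_forall_lt fun c hc => ?_
    have := nmul_nadd_lt (a' := c) (a := a) (b' := 0) (b := 1) hc zero_lt_one
    rw [nmul_zero, nmul_zero, nadd_zero, nadd_zero, nmul_one c] at this
    exact this
termination_by a

theorem one_nmul (a : Ordinal.{u}) : 1 ⨳ a = a := by
  rw [nmul_comm, nmul_one]

theorem nmul_lt_nmul_of_pos_left {a b c : Ordinal.{u}} (h : a < b) (hc : 0 < c) :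
    c ⨳ a < c ⨳ b := by
  have := nmul_nadd_lt hc h
  rwa [zero_nmul, zero_nmul, zero_nadd, nadd_zero] at this

theorem nmul_lt_nmul_of_pos_right {a b c : Ordinal.{u}} (h : a < b) (hc : 0 < c) :
    a ⨳ c < b ⨳ c := by
  rw [nmul_comm a, nmul_comm b]
  exact nmul_lt_nmul_of_pos_left h hc

theorem nmul_le_nmul_left {a b : Ordinal.{u}} (h : a ≤ b) (c : Ordinal.{u}) :
    c ⨳ a ≤ c ⨳ b := by
  rcases eq_or_ne c 0 with rfl | hc
  · simp
  rcases h.lt_or_eq with h | rfl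
  · exact (nmul_lt_nmul_of_pos_left h (pos_iff_ne_zero.2 hc)).le
  · exact le_rfl

theorem nmul_le_nmul_right {a b : Ordinal.{u}} (h : a ≤ b) (c : Ordinal.{u}) :
    a ⨳ c ≤ b ⨳ c := by
  rw [nmul_comm a, nmul_comm b]
  exact nmul_le_nmul_left h c

theorem nmul_nadd (a b c : Ordinal.{u}) : a ⨳ (b ♯ c) = a ⨳ b ♯ a ⨳ c := by
  apply le_antisymm
  · rw [nmul_le_iff]
    intro a' ha d hd
    rcases lt_nadd_iff.1 hd with ⟨b', hb, hd⟩ | ⟨c', hc, hd⟩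
    · have H := nadd_lt_nadd_of_lt_of_le (nmul_nadd_lt ha hb) (nmul_nadd_le ha.le hd)
      have key : (a' ⨳ (b ♯ c) ♯ a ⨳ d) ♯ (a ⨳ b' ♯ a' ⨳ b')
          < (a ⨳ b ♯ a ⨳ c ♯ a' ⨳ d) ♯ (a ⨳ b' ♯ a' ⨳ b') := by
        convert H using 1
        · rw [nmul_nadd a' b c, nmul_nadd a' b' c]; ac_rfl
        · rw [nmul_nadd a b' c]; ac_rfl
      exact (nadd_lt_nadd_iff_right _).1 key
    · have H := nadd_lt_nadd_of_lt_of_le (nmul_nadd_lt ha hc) (nmul_nadd_le ha.le hd)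
      have key : (a' ⨳ (b ♯ c) ♯ a ⨳ d) ♯ (a ⨳ c' ♯ a' ⨳ c')
          < (a ⨳ b ♯ a ⨳ c ♯ a' ⨳ d) ♯ (a ⨳ c' ♯ a' ⨳ c') := by
        convert H using 1
        · rw [nmul_nadd a' b c, nmul_nadd a' b c']; ac_rfl
        · rw [nmul_nadd a b c']; ac_rfl
      exact (nadd_lt_nadd_iff_right _).1 key
  · rw [nadd_le_iff]
    constructor
    · intro x hx
      obtain ⟨a', ha, b', hb, hx⟩ := lt_nmul_iff.1 hx
      have H := nmul_nadd_lt ha (nadd_lt_nadd_right hb c)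
      have H2 := nadd_le_nadd_right hx (a ⨳ c ♯ a' ⨳ c)
      have key : (x ♯ a ⨳ c) ♯ (a' ⨳ b' ♯ a' ⨳ c) < a ⨳ (b ♯ c) ♯ (a' ⨳ b' ♯ a' ⨳ c) := by
        refine lt_of_eq_of_lt ?_ (lt_of_le_of_lt H2 ?_)
        · ac_rfl
        · convert H using 1
          · rw [nmul_nadd a' b c, nmul_nadd a b' c]; ac_rfl
          · rw [nmul_nadd a' b' c]
      exact (nadd_lt_nadd_iff_right _).1 key
    · intro x hx
      obtain ⟨a', ha, c', hc, hx⟩ := lt_nmul_iff.1 hx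
      have H := nmul_nadd_lt ha (nadd_lt_nadd_left hc b)
      have H2 := nadd_le_nadd_right hx (a ⨳ b ♯ a' ⨳ b)
      have key : (a ⨳ b ♯ x) ♯ (a' ⨳ c' ♯ a' ⨳ b) < a ⨳ (b ♯ c) ♯ (a' ⨳ c' ♯ a' ⨳ b) := by
        refine lt_of_eq_of_lt ?_ (lt_of_le_of_lt H2 ?_)
        · ac_rfl
        · convert H using 1
          · rw [nmul_nadd a' b c, nmul_nadd a b c']; ac_rfl
          · rw [nmul_nadd a' b c']; ac_rfl
      exact (nadd_lt_nadd_iff_right _).1 key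
termination_by (a, b, c)

theorem nadd_nmul (a b c : Ordinal.{u}) : (a ♯ b) ⨳ c = a ⨳ c ♯ b ⨳ c := by
  rw [nmul_comm, nmul_nadd, nmul_comm, nmul_comm c]

theorem nmul_succ (a b : Ordinal.{u}) : a ⨳ Order.succ b = a ⨳ b ♯ a := by
  rw [← nadd_one, nmul_nadd, nmul_one]

theorem mul_le_nmul (a b : Ordinal.{u}) : a * b ≤ a ⨳ b := by
  induction b using WellFoundedLT.induction with
  | _ b IH =>
  rcases zero_or_succ_or_isSuccLimit b with rfl | ⟨c, rfl⟩ | hb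
  · simp
  · rw [mul_succ, nmul_succ]
    exact (add_le_nadd _ a).trans (nadd_le_nadd_right (IH c (Order.lt_succ c)) a)
  · rw [mul_le_iff_of_isSuccLimit hb]
    intro b' hb'
    exact (IH b' hb').trans (nmul_le_nmul_left hb'.le a)

theorem nmul_nadd_lt₃ {a' b' c' a b c : Ordinal.{u}} (ha : a' < a) (hb : b' < b) (hc : c' < c) :
    a' ⨳ b ⨳ c ♯ a ⨳ b' ⨳ c ♯ a ⨳ b ⨳ c' ♯ a' ⨳ b' ⨳ c' <
      a ⨳ b ⨳ c ♯ a' ⨳ b' ⨳ c ♯ a' ⨳ b ⨳ c' ♯ a ⨳ b' ⨳ c' := by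
  have H := nmul_nadd_lt (nmul_nadd_lt ha hb) hc
  simp only [nadd_nmul] at H
  convert H using 1 <;> ac_rfl

theorem nmul_nadd_le₃ {a' b' c' a b c : Ordinal.{u}} (ha : a' ≤ a) (hb : b' ≤ b) (hc : c' ≤ c) :
    a' ⨳ b ⨳ c ♯ a ⨳ b' ⨳ c ♯ a ⨳ b ⨳ c' ♯ a' ⨳ b' ⨳ c' ≤
      a ⨳ b ⨳ c ♯ a' ⨳ b' ⨳ c ♯ a' ⨳ b ⨳ c' ♯ a ⨳ b' ⨳ c' := by
  have H := nmul_nadd_le (nmul_nadd_le ha hb) hc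
  simp only [nadd_nmul] at H
  convert H using 1 <;> ac_rfl

theorem nmul_le_iff₃ {a b c d : Ordinal.{u}} : a ⨳ b ⨳ c ≤ d ↔
    ∀ a' < a, ∀ b' < b, ∀ c' < c,
      a' ⨳ b ⨳ c ♯ a ⨳ b' ⨳ c ♯ a ⨳ b ⨳ c' ♯ a' ⨳ b' ⨳ c' <
        d ♯ (a' ⨳ b' ⨳ c ♯ a' ⨳ b ⨳ c' ♯ a ⨳ b' ⨳ c') := by
  constructor
  · intro h a' ha b' hb c' hc
    have H := nmul_nadd_lt₃ ha hb hc
    have H2 := nadd_le_nadd_right h (a' ⨳ b' ⨳ c ♯ a' ⨳ b ⨳ c' ♯ a ⨳ b' ⨳ c')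
    refine lt_of_lt_of_le (lt_of_lt_of_eq H ?_) H2
    ac_rfl
  · intro h
    refine le_of_not_gt fun hd => ?_
    obtain ⟨e, he, c', hc, H₁⟩ := lt_nmul_iff.1 hd
    obtain ⟨a', ha, b', hb, H₂⟩ := lt_nmul_iff.1 he
    have H3 := nadd_le_nadd H₁ (nmul_nadd_le H₂ hc.le)
    have H4 := h a' ha b' hb c' hc
    simp only [nadd_nmul] at H3
    have key : (d ♯ (a' ⨳ b' ⨳ c ♯ a' ⨳ b ⨳ c' ♯ a ⨳ b' ⨳ c')) ♯ (e ⨳ c' ♯ e ⨳ c) ≤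
        (a' ⨳ b ⨳ c ♯ a ⨳ b' ⨳ c ♯ a ⨳ b ⨳ c' ♯ a' ⨳ b' ⨳ c') ♯ (e ⨳ c' ♯ e ⨳ c) := by
      convert H3 using 1 <;> ac_rfl
    exact (not_le_of_gt H4) ((nadd_le_nadd_iff_right _).1 key)

theorem nmul_assoc (a b c : Ordinal.{u}) : a ⨳ b ⨳ c = a ⨳ (b ⨳ c) := by
  have h3 : ∀ x y z : Ordinal.{u}, x ⨳ y ⨳ z = z ⨳ (y ⨳ x) := fun x y z => by
    rw [nmul_comm _ z, nmul_comm x y]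
  apply le_antisymm
  · rw [nmul_le_iff₃]
    intro a' ha b' hb c' hc
    rw [nmul_assoc a' b c, nmul_assoc a b' c, nmul_assoc a b c', nmul_assoc a' b' c',
      nmul_assoc a' b' c, nmul_assoc a' b c', nmul_assoc a b' c']
    have H := nmul_nadd_lt ha (nmul_nadd_lt hb hc)
    simp only [nmul_nadd] at H
    convert H using 1 <;> ac_rfl
  · rw [← h3 c b a, nmul_le_iff₃]
    intro c' hc b' hb a' ha
    rw [h3 c' b a, h3 c b' a, h3 c b a', h3 c' b' a', h3 c' b' a, h3 c' b a', h3 c b' a',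
      ← nmul_assoc a b c', ← nmul_assoc a b' c, ← nmul_assoc a' b c, ← nmul_assoc a' b' c',
      ← nmul_assoc a b' c', ← nmul_assoc a' b c', ← nmul_assoc a' b' c]
    have H := nmul_nadd_lt₃ ha hb hc
    convert H using 1 <;> ac_rfl
termination_by (a, b, c)

end Ordinal

open Ordinal in
/-- Key "CNF" fact for natural addition: adding an ordinal below `ω ^ d` to a
multiple of `ω ^ d` naturally is the same as adding it on the right. -/
private lemma aux_core {d : Ordinal}
    (HΦ : ∀ x < ω ^ d, ∀ y < ω ^ d, x ♯ y < ω ^ d) :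
    ∀ K : Ordinal, ∀ u < ω ^ d, ω ^ d * K ♯ u ≤ ω ^ d * K + u := by
  intro K
  induction K using Ordinal.induction with
  | h K IHK =>
  intro u
  induction u using Ordinal.induction with
  | h u IHu =>
  intro hu
  rw [nadd_le_iff]
  have hd0 : (ω ^ d : Ordinal) ≠ 0 := (opow_pos d omega0_pos).ne'
  constructor
  · intro w hw
    have hj : w / ω ^ d < K := (Ordinal.div_lt hd0).2 hw
    have hmod : w % (ω ^ d) < ω ^ d := mod_lt w hd0
    have hz : w % (ω ^ d) ♯ u < ω ^ d := HΦ _ hmod _ hu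
    calc w ♯ u = (ω ^ d * (w / ω ^ d) + w % (ω ^ d)) ♯ u := by
          rw [Ordinal.div_add_mod]
      _ ≤ (ω ^ d * (w / ω ^ d) ♯ w % (ω ^ d)) ♯ u :=
          nadd_le_nadd_right (add_le_nadd _ _) u
      _ = ω ^ d * (w / ω ^ d) ♯ (w % (ω ^ d) ♯ u) := nadd_assoc _ _ _
      _ ≤ ω ^ d * (w / ω ^ d) + (w % (ω ^ d) ♯ u) := IHK _ hj _ hz
      _ < ω ^ d * (w / ω ^ d) + ω ^ d := add_lt_add_right hz _
      _ = ω ^ d * Order.succ (w / ω ^ d) := (mul_succ _ _).symm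
      _ ≤ ω ^ d * K := mul_le_mul_right (Order.succ_le_of_lt hj) _
      _ ≤ ω ^ d * K + u := le_add_right le_rfl
  · intro v hv
    calc ω ^ d * K ♯ v ≤ ω ^ d * K + v := IHu v hv (hv.trans hu)
      _ < ω ^ d * K + u := add_lt_add_right hv _

open Ordinal in
/-- Natural addition of finite multiples of `ω ^ d`. -/
private lemma aux_M {d : Ordinal}
    (HΦ : ∀ x < ω ^ d, ∀ y < ω ^ d, x ♯ y < ω ^ d) :
    ∀ n : ℕ, ∀ i j : ℕ, i + j = n →
      ω ^ d * i ♯ ω ^ d * j ≤ ω ^ d * (i + j : ℕ) := by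
  have hd0 : (ω ^ d : Ordinal) ≠ 0 := (opow_pos d omega0_pos).ne'
  intro n
  induction n using Nat.strong_induction_on with
  | _ n IH =>
  have side : ∀ i j : ℕ, i + j = n → ∀ u < ω ^ d * (i : Ordinal),
      u ♯ ω ^ d * (j : Ordinal) < ω ^ d * ((i + j : ℕ) : Ordinal) := by
    intro i j hij u hu
    have hdiv : u / ω ^ d < (i : Ordinal) := (Ordinal.div_lt hd0).2 hu
    obtain ⟨i₀, hi₀⟩ := lt_omega0.1 (hdiv.trans (nat_lt_omega0 i))
    have hi₀i : i₀ < i := by exact_mod_cast hi₀ ▸ hdiv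
    have hmod : u % (ω ^ d) < ω ^ d := mod_lt u hd0
    have hIH : ω ^ d * (i₀ : Ordinal) ♯ ω ^ d * (j : Ordinal)
        ≤ ω ^ d * ((i₀ + j : ℕ) : Ordinal) := by
      exact IH (i₀ + j) (by omega) i₀ j rfl
    calc u ♯ ω ^ d * (j : Ordinal)
        = (ω ^ d * (u / ω ^ d) + u % (ω ^ d)) ♯ ω ^ d * (j : Ordinal) := by
          rw [Ordinal.div_add_mod]
      _ ≤ (ω ^ d * (i₀ : Ordinal) ♯ u % (ω ^ d)) ♯ ω ^ d * (j : Ordinal) := by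
          rw [← hi₀]; exact nadd_le_nadd_right (add_le_nadd _ _) _
      _ = (ω ^ d * (i₀ : Ordinal) ♯ ω ^ d * (j : Ordinal)) ♯ u % (ω ^ d) := by
          rw [nadd_assoc, nadd_assoc, nadd_comm (u % (ω ^ d))]
      _ ≤ ω ^ d * ((i₀ + j : ℕ) : Ordinal) ♯ u % (ω ^ d) :=
          nadd_le_nadd_right hIH _
      _ ≤ ω ^ d * ((i₀ + j : ℕ) : Ordinal) + u % (ω ^ d) :=
          aux_core HΦ _ _ hmod
      _ < ω ^ d * ((i₀ + j : ℕ) : Ordinal) + ω ^ d := add_lt_add_right hmod _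
      _ = ω ^ d * ((i₀ + j + 1 : ℕ) : Ordinal) := by
          push_cast; simp [mul_add, mul_succ]
      _ ≤ ω ^ d * ((i + j : ℕ) : Ordinal) := by
          apply mul_le_mul_right
          exact_mod_cast Nat.cast_le.2 (show i₀ + j + 1 ≤ i + j by omega)
  intro i j hij
  rw [nadd_le_iff]
  constructor
  · intro u hu
    exact side i j hij u hu
  · intro v hv
    rw [nadd_comm]
    have := side j i (by omega) v hv
    rwa [Nat.add_comm j i] at this

open Ordinal in
/-- `ω ^ c` is closed under natural addition. -/
private lemma aux_nadd_closed : ∀ c : Ordinal, ∀ x < ω ^ c, ∀ y < ω ^ c,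
    x ♯ y < ω ^ c := by
  intro c
  induction c using Ordinal.induction with
  | h c IH =>
  intro x hx y hy
  rcases zero_or_succ_or_isSuccLimit c with rfl | ⟨d, rfl⟩ | hc
  · rw [opow_zero, lt_one_iff_zero] at hx hy
    subst hx; subst hy
    simp
  · -- successor case
    have HΦ := IH d (Order.lt_succ d)
    have hd0 : (ω ^ d : Ordinal) ≠ 0 := (opow_pos d omega0_pos).ne'
    rw [opow_succ] at hx hy ⊢
    have hxd : x / ω ^ d < ω := (Ordinal.div_lt hd0).2 hx
    have hyd : y / ω ^ d < ω := (Ordinal.div_lt hd0).2 hy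
    obtain ⟨i, hi⟩ := lt_omega0.1 hxd
    obtain ⟨j, hj⟩ := lt_omega0.1 hyd
    have hxm : x % (ω ^ d) < ω ^ d := mod_lt x hd0
    have hym : y % (ω ^ d) < ω ^ d := mod_lt y hd0
    have hz : x % (ω ^ d) ♯ y % (ω ^ d) < ω ^ d := HΦ _ hxm _ hym
    calc x ♯ y = (ω ^ d * (i : Ordinal) + x % (ω ^ d))
          ♯ (ω ^ d * (j : Ordinal) + y % (ω ^ d)) := by
          rw [← hi, ← hj, Ordinal.div_add_mod, Ordinal.div_add_mod]
      _ ≤ (ω ^ d * (i : Ordinal) ♯ x % (ω ^ d))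
          ♯ (ω ^ d * (j : Ordinal) ♯ y % (ω ^ d)) :=
          nadd_le_nadd (add_le_nadd _ _) (add_le_nadd _ _)
      _ = (ω ^ d * (i : Ordinal) ♯ ω ^ d * (j : Ordinal))
          ♯ (x % (ω ^ d) ♯ y % (ω ^ d)) := by
          rw [nadd_assoc, nadd_assoc]
          congr 1
          rw [← nadd_assoc, ← nadd_assoc, nadd_comm (x % (ω ^ d))]
      _ ≤ ω ^ d * ((i + j : ℕ) : Ordinal) ♯ (x % (ω ^ d) ♯ y % (ω ^ d)) :=
          nadd_le_nadd_right (aux_M HΦ (i + j) i j rfl) _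
      _ ≤ ω ^ d * ((i + j : ℕ) : Ordinal) + (x % (ω ^ d) ♯ y % (ω ^ d)) :=
          aux_core HΦ _ _ hz
      _ < ω ^ d * ((i + j : ℕ) : Ordinal) + ω ^ d := add_lt_add_right hz _
      _ = ω ^ d * ((i + j + 1 : ℕ) : Ordinal) := by
          push_cast; simp [mul_add, mul_succ]
      _ < ω ^ d * ω := mul_lt_mul_of_pos_left (nat_lt_omega0 _)
          (opow_pos d omega0_pos)
  · -- limit case
    obtain ⟨c₁, hc₁, hx₁⟩ := (lt_opow_of_isSuccLimit omega0_ne_zero hc).1 hx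
    obtain ⟨c₂, hc₂, hy₂⟩ := (lt_opow_of_isSuccLimit omega0_ne_zero hc).1 hy
    have hx₃ : x < ω ^ max c₁ c₂ :=
      hx₁.trans_le (opow_le_opow_right omega0_pos (le_max_left _ _))
    have hy₃ : y < ω ^ max c₁ c₂ :=
      hy₂.trans_le (opow_le_opow_right omega0_pos (le_max_right _ _))
    exact (IH _ (max_lt hc₁ hc₂) x hx₃ y hy₃).trans
      ((opow_lt_opow_iff_right one_lt_omega0).2 (max_lt hc₁ hc₂))

open Ordinal in
/-- Natural multiplication of natural numbers is ordinary multiplication. -/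
private lemma aux_natmul (m n : ℕ) :
    (m : Ordinal) ⨳ (n : Ordinal) = ((m * n : ℕ) : Ordinal) := by
  induction n with
  | zero => simp [nmul_zero]
  | succ n ih =>
    have : ((n + 1 : ℕ) : Ordinal) = Order.succ (n : Ordinal) := by
      push_cast; rw [Ordinal.add_one_eq_succ]
    rw [this, nmul_succ, ih, nadd_nat]
    push_cast
    rw [mul_add, mul_one]

open Ordinal in
/-- A finite natural multiple of `ω ^ c` is the ordinary multiple. -/
private lemma aux_K (c : Ordinal) (m : ℕ) :
    (ω ^ c : Ordinal) ⨳ (m : Ordinal) ≤ ω ^ c * m := by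
  induction m with
  | zero => simp [nmul_zero]
  | succ m ih =>
    have h1 : ((m + 1 : ℕ) : Ordinal) = Order.succ (m : Ordinal) := by
      push_cast; rw [Ordinal.add_one_eq_succ]
    rw [h1, nmul_succ]
    calc ω ^ c ⨳ (m : Ordinal) ♯ ω ^ c
        ≤ ω ^ c * (m : Ordinal) ♯ ω ^ c := nadd_le_nadd_right ih _
      _ = ω ^ c * (m : Ordinal) ♯ ω ^ c * ((1 : ℕ) : Ordinal) := by simp
      _ ≤ ω ^ c * ((m + 1 : ℕ) : Ordinal) :=
          aux_M (aux_nadd_closed c) (m + 1) m 1 rfl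
      _ = ω ^ c * Order.succ (m : Ordinal) := by rw [h1]

open Ordinal in
private lemma aux_decomp {a p : Ordinal} (ha : a ≠ 0) (h : a < ω ^ p) :
    ∃ d < p, ∃ m : ℕ, a < ω ^ d * m := by
  refine ⟨log ω a, (lt_opow_iff_log_lt one_lt_omega0 ha).1 h, ?_⟩
  have hd0 : (ω ^ log ω a : Ordinal) ≠ 0 := (opow_pos _ omega0_pos).ne'
  have h2 : a < ω ^ (log ω a) * ω := by
    rw [← opow_succ]; exact lt_opow_succ_log_self one_lt_omega0 a
  obtain ⟨m, hm⟩ := lt_omega0.1 ((Ordinal.div_lt hd0).2 h2)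
  refine ⟨m + 1, ?_⟩
  have := Ordinal.lt_mul_succ_div a hd0
  rw [hm] at this
  calc a < ω ^ log ω a * Order.succ (m : Ordinal) := this
    _ = ω ^ log ω a * ((m + 1 : ℕ) : Ordinal) := by
        push_cast; rw [Ordinal.add_one_eq_succ]

open Ordinal in
/-- rearrangement for natural multiplication -/
private lemma aux_nmul_swap (x m y n : Ordinal) :
    (x ⨳ m) ⨳ (y ⨳ n) = (x ⨳ y) ⨳ (m ⨳ n) := by
  rw [nmul_assoc, nmul_assoc]
  congr 1
  rw [← nmul_assoc, nmul_comm m y, nmul_assoc]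

open Ordinal in
/-- The key estimate: `ω ^ p ⨳ ω ^ q ≤ ω ^ (p ♯ q)`. -/
private lemma aux_E : ∀ p q : Ordinal, (ω ^ p : Ordinal) ⨳ ω ^ q ≤ ω ^ (p ♯ q) := by
  intro p
  induction p using Ordinal.induction with
  | h p IHp =>
  intro q
  induction q using Ordinal.induction with
  | h q IHq =>
  rw [nmul_le_iff]
  intro a' ha' b' hb'
  have h1 : a' ⨳ ω ^ q < ω ^ (p ♯ q) := by
    rcases eq_or_ne a' 0 with rfl | ha0
    · rw [zero_nmul]; exact opow_pos _ omega0_pos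
    · obtain ⟨d, hd, m, hm⟩ := aux_decomp ha0 ha'
      calc a' ⨳ ω ^ q ≤ (ω ^ d * (m : Ordinal)) ⨳ ω ^ q :=
            nmul_le_nmul_right hm.le _
        _ ≤ (ω ^ d ⨳ (m : Ordinal)) ⨳ ω ^ q :=
            nmul_le_nmul_right (mul_le_nmul _ _) _
        _ = (ω ^ d ⨳ ω ^ q) ⨳ (m : Ordinal) := by
            rw [nmul_assoc, nmul_comm (m : Ordinal), ← nmul_assoc]
        _ ≤ (ω ^ (d ♯ q)) ⨳ (m : Ordinal) :=
            nmul_le_nmul_right (IHp d hd q) _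
        _ ≤ ω ^ (d ♯ q) * (m : Ordinal) := aux_K _ m
        _ < ω ^ (d ♯ q) * ω :=
            mul_lt_mul_of_pos_left (nat_lt_omega0 m) (opow_pos _ omega0_pos)
        _ = ω ^ Order.succ (d ♯ q) := by rw [opow_succ]
        _ = ω ^ (Order.succ d ♯ q) := by rw [succ_nadd]
        _ ≤ ω ^ (p ♯ q) := opow_le_opow_right omega0_pos
            (nadd_le_nadd_right (Order.succ_le_of_lt hd) q)
  have h2 : (ω ^ p : Ordinal) ⨳ b' < ω ^ (p ♯ q) := by
    rcases eq_or_ne b' 0 with rfl | hb0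
    · rw [nmul_zero]; exact opow_pos _ omega0_pos
    · obtain ⟨e, he, n, hn⟩ := aux_decomp hb0 hb'
      calc (ω ^ p : Ordinal) ⨳ b' ≤ ω ^ p ⨳ (ω ^ e * (n : Ordinal)) :=
            nmul_le_nmul_left hn.le _
        _ ≤ ω ^ p ⨳ (ω ^ e ⨳ (n : Ordinal)) :=
            nmul_le_nmul_left (mul_le_nmul _ _) _
        _ = (ω ^ p ⨳ ω ^ e) ⨳ (n : Ordinal) := by rw [nmul_assoc]
        _ ≤ (ω ^ (p ♯ e)) ⨳ (n : Ordinal) :=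
            nmul_le_nmul_right (IHq e he) _
        _ ≤ ω ^ (p ♯ e) * (n : Ordinal) := aux_K _ n
        _ < ω ^ (p ♯ e) * ω :=
            mul_lt_mul_of_pos_left (nat_lt_omega0 n) (opow_pos _ omega0_pos)
        _ = ω ^ Order.succ (p ♯ e) := by rw [opow_succ]
        _ = ω ^ (p ♯ Order.succ e) := by rw [nadd_succ]
        _ ≤ ω ^ (p ♯ q) := opow_le_opow_right omega0_pos
            (nadd_le_nadd_left (Order.succ_le_of_lt he) p)
  calc a' ⨳ ω ^ q ♯ ω ^ p ⨳ b' < ω ^ (p ♯ q) :=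
        aux_nadd_closed _ _ h1 _ h2
    _ ≤ ω ^ (p ♯ q) ♯ a' ⨳ b' := le_self_nadd

open Ordinal in
/-- Strict version: `a < ω ^ p`, `b < ω ^ q` imply `a ⨳ b < ω ^ (p ♯ q)`. -/
private lemma aux_W {p q a b : Ordinal} (ha : a < ω ^ p) (hb : b < ω ^ q) :
    a ⨳ b < ω ^ (p ♯ q) := by
  rcases eq_or_ne a 0 with rfl | ha0
  · rw [zero_nmul]; exact opow_pos _ omega0_pos
  rcases eq_or_ne b 0 with rfl | hb0
  · rw [nmul_zero]; exact opow_pos _ omega0_pos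
  obtain ⟨d, hd, m, hm⟩ := aux_decomp ha0 ha
  obtain ⟨e, he, n, hn⟩ := aux_decomp hb0 hb
  have hbpos : 0 < b := pos_iff_ne_zero.2 hb0
  calc a ⨳ b < (ω ^ d * (m : Ordinal)) ⨳ b :=
        nmul_lt_nmul_of_pos_right hm hbpos
    _ ≤ (ω ^ d * (m : Ordinal)) ⨳ (ω ^ e * (n : Ordinal)) :=
        nmul_le_nmul_left hn.le _
    _ ≤ (ω ^ d ⨳ (m : Ordinal)) ⨳ (ω ^ e ⨳ (n : Ordinal)) :=
        (nmul_le_nmul_right (mul_le_nmul _ _) _).trans (nmul_le_nmul_left (mul_le_nmul _ _) _)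
    _ = (ω ^ d ⨳ ω ^ e) ⨳ ((m : Ordinal) ⨳ (n : Ordinal)) :=
        aux_nmul_swap _ _ _ _
    _ = (ω ^ d ⨳ ω ^ e) ⨳ ((m * n : ℕ) : Ordinal) := by rw [aux_natmul]
    _ ≤ (ω ^ (d ♯ e)) ⨳ ((m * n : ℕ) : Ordinal) :=
        nmul_le_nmul_right (aux_E d e) _
    _ ≤ ω ^ (d ♯ e) * ((m * n : ℕ) : Ordinal) := aux_K _ _
    _ < ω ^ (d ♯ e) * ω :=
        mul_lt_mul_of_pos_left (nat_lt_omega0 _) (opow_pos _ omega0_pos)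
    _ = ω ^ Order.succ (d ♯ e) := by rw [opow_succ]
    _ ≤ ω ^ (p ♯ q) := opow_le_opow_right omega0_pos
        (Order.succ_le_of_lt (nadd_lt_nadd hd he))

open Ordinal in
/-- A multiplicatively closed ordinal is closed under Hessenberg natural
multiplication. -/
theorem multiplicatively_closed_nmul_closed {α : Ordinal}
    (h : ∀ β < α, ∀ γ < α, β * γ < α) :
    ∀ β < α, ∀ γ < α, β ⨳ γ < α := by
  intro β hβ γ hγ
  have hP : Principal (· * ·) α := fun a b ha hb => h a ha b hb
  rcases principal_mul_iff_le_two_or_omega0_opow_opow.1 hP with h2 | ⟨o, rfl⟩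
  · -- α ≤ 2
    have hβ1 : β ≤ 1 := by
      have : β < 2 := hβ.trans_le h2
      rwa [← Ordinal.succ_one, Order.lt_succ_iff] at this
    calc β ⨳ γ ≤ 1 ⨳ γ := nmul_le_nmul_right hβ1 γ
      _ = γ := one_nmul γ
      _ < α := hγ
  · dsimp only at hβ hγ ⊢
    rcases eq_or_ne β 0 with rfl | hβ0
    · rw [zero_nmul]; exact opow_pos _ omega0_pos
    rcases eq_or_ne γ 0 with rfl | hγ0
    · rw [nmul_zero]; exact opow_pos _ omega0_pos
    rcases eq_or_ne o 0 with rfl | ho0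
    · -- α = ω
      rw [opow_zero, opow_one] at hβ hγ ⊢
      obtain ⟨m, rfl⟩ := lt_omega0.1 hβ
      obtain ⟨n, rfl⟩ := lt_omega0.1 hγ
      rw [aux_natmul]
      exact nat_lt_omega0 _
    · -- α = ω ^ ω ^ o, o > 0
      have h1lt : (1 : Ordinal) < ω ^ o :=
        one_lt_omega0.trans_le (by
          simpa using opow_le_opow_right omega0_pos
            (Ordinal.one_le_iff_ne_zero.2 ho0))
      have hp : log ω β < ω ^ o := (lt_opow_iff_log_lt one_lt_omega0 hβ0).1 hβ
      have hq : log ω γ < ω ^ o := (lt_opow_iff_log_lt one_lt_omega0 hγ0).1 hγ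
      have hp' : Order.succ (log ω β) < ω ^ o := by
        rw [← nadd_one]
        exact aux_nadd_closed o _ hp _ h1lt
      have hq' : Order.succ (log ω γ) < ω ^ o := by
        rw [← nadd_one]
        exact aux_nadd_closed o _ hq _ h1lt
      have hW := aux_W (lt_opow_succ_log_self one_lt_omega0 β)
        (lt_opow_succ_log_self one_lt_omega0 γ)
      refine hW.trans_le (opow_le_opow_right omega0_pos ?_)
      exact (aux_nadd_closed o _ hp' _ hq').le
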